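/- There exists θ ∈ ℝ such that (id₃ ⊗ φ_{C₁}(θ))ρ is not positive semidefinite, where φ_{C₁}(θ)(X) = φ_{C₁}(U(θ) X U(θ)†) with U(θ) = [[cos θ, 0, sin θ],[0,1,0],[−sin θ, 0, cos θ]], and ρ is the TILES PPT state (1/4)(I₉ − Σ_{i=0}^4 |ψ_i⟩⟨ψ_i|). Hence the inner-automorphism extension of the Choi map detects the entanglement of the TILES state. -/

import Mathlib

open Matrix ComplexOrder

/-- Standard basis vector `|i⟩` of `ℂ³`. -/
noncomputable def e (i : Fin 3) : Fin 3 → ℂ := Pi.single i 1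

/-- Tensor product of two vectors of `ℂ³`, as a vector of `ℂ³ ⊗ ℂ³ ≅ ℂ⁹`. -/
def tens (a b : Fin 3 → ℂ) : Fin 3 × Fin 3 → ℂ := fun p => a p.1 * b p.2

/-- The five TILES vectors in `ℂ³ ⊗ ℂ³`. -/
noncomputable def tiles : Fin 5 → (Fin 3 × Fin 3 → ℂ)
  | 0 => (1 / Real.sqrt 2 : ℝ) • tens (e 0) (e 0 - e 1)
  | 1 => (1 / Real.sqrt 2 : ℝ) • tens (e 0 - e 1) (e 2)
  | 2 => (1 / Real.sqrt 2 : ℝ) • tens (e 2) (e 1 - e 2)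
  | 3 => (1 / Real.sqrt 2 : ℝ) • tens (e 1 - e 2) (e 0)
  | 4 => (1 / 3 : ℝ) • tens (e 0 + e 1 + e 2) (e 0 + e 1 + e 2)

/-- The TILES state `ρ = (1/4)(I₉ − Σᵢ |ψᵢ⟩⟨ψᵢ|)`. -/
noncomputable def tilesState : Matrix (Fin 3 × Fin 3) (Fin 3 × Fin 3) ℂ :=
  (1 / 4 : ℂ) •
    (1 - ∑ i : Fin 5, Matrix.vecMulVec (tiles i) (fun q => (starRingEnd ℂ) (tiles i q)))

/-- The Choi map `φ_{C₁}` on `M₃(ℂ)`. -/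
noncomputable def choi1 (x : Matrix (Fin 3) (Fin 3) ℂ) : Matrix (Fin 3) (Fin 3) ℂ :=
  (1 / 2 : ℂ) •
    !![x 0 0 + x 1 1, -x 0 1, -x 0 2;
       -x 1 0, x 1 1 + x 2 2, -x 1 2;
       -x 2 0, -x 2 1, x 2 2 + x 0 0]

/-- The extension `id₃ ⊗ φ` of a map `φ` on `M₃(ℂ)`, acting blockwise. -/
noncomputable def matExt3 (φ : Matrix (Fin 3) (Fin 3) ℂ → Matrix (Fin 3) (Fin 3) ℂ)
    (ρ : Matrix (Fin 3 × Fin 3) (Fin 3 × Fin 3) ℂ) :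
    Matrix (Fin 3 × Fin 3) (Fin 3 × Fin 3) ℂ :=
  Matrix.of fun p q => φ (Matrix.of fun a b => ρ (p.1, a) (q.1, b)) p.2 q.2

/-- The rotation matrix `U(θ)`. -/
noncomputable def rotU (θ : ℝ) : Matrix (Fin 3) (Fin 3) ℂ :=
  !![(Real.cos θ : ℂ), 0, (Real.sin θ : ℂ);
     0, 1, 0;
     (-Real.sin θ : ℂ), 0, (Real.cos θ : ℂ)]

noncomputable def BB : Fin 3 → Fin 3 → Matrix (Fin 3) (Fin 3) ℂ
  | 0, 0 => !![(7/72 : ℂ), (7/72 : ℂ), (-(1/36 : ℂ));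
       (7/72 : ℂ), (7/72 : ℂ), (-(1/36 : ℂ));
       (-(1/36 : ℂ)), (-(1/36 : ℂ)), (7/72 : ℂ)]
  | 0, 1 => !![(-(1/36 : ℂ)), (-(1/36 : ℂ)), (-(1/36 : ℂ));
       (-(1/36 : ℂ)), (-(1/36 : ℂ)), (-(1/36 : ℂ));
       (-(1/36 : ℂ)), (-(1/36 : ℂ)), (7/72 : ℂ)]
  | 0, 2 => !![(-(1/36 : ℂ)), (-(1/36 : ℂ)), (-(1/36 : ℂ));
       (-(1/36 : ℂ)), (-(1/36 : ℂ)), (-(1/36 : ℂ));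
       (-(1/36 : ℂ)), (-(1/36 : ℂ)), (-(1/36 : ℂ))]
  | 1, 0 => !![(-(1/36 : ℂ)), (-(1/36 : ℂ)), (-(1/36 : ℂ));
       (-(1/36 : ℂ)), (-(1/36 : ℂ)), (-(1/36 : ℂ));
       (-(1/36 : ℂ)), (-(1/36 : ℂ)), (7/72 : ℂ)]
  | 1, 1 => !![(7/72 : ℂ), (-(1/36 : ℂ)), (-(1/36 : ℂ));
       (-(1/36 : ℂ)), (2/9 : ℂ), (-(1/36 : ℂ));
       (-(1/36 : ℂ)), (-(1/36 : ℂ)), (7/72 : ℂ)]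
  | 1, 2 => !![(7/72 : ℂ), (-(1/36 : ℂ)), (-(1/36 : ℂ));
       (-(1/36 : ℂ)), (-(1/36 : ℂ)), (-(1/36 : ℂ));
       (-(1/36 : ℂ)), (-(1/36 : ℂ)), (-(1/36 : ℂ))]
  | 2, 0 => !![(-(1/36 : ℂ)), (-(1/36 : ℂ)), (-(1/36 : ℂ));
       (-(1/36 : ℂ)), (-(1/36 : ℂ)), (-(1/36 : ℂ));
       (-(1/36 : ℂ)), (-(1/36 : ℂ)), (-(1/36 : ℂ))]
  | 2, 1 => !![(7/72 : ℂ), (-(1/36 : ℂ)), (-(1/36 : ℂ));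
       (-(1/36 : ℂ)), (-(1/36 : ℂ)), (-(1/36 : ℂ));
       (-(1/36 : ℂ)), (-(1/36 : ℂ)), (-(1/36 : ℂ))]
  | 2, 2 => !![(7/72 : ℂ), (-(1/36 : ℂ)), (-(1/36 : ℂ));
       (-(1/36 : ℂ)), (7/72 : ℂ), (7/72 : ℂ);
       (-(1/36 : ℂ)), (7/72 : ℂ), (7/72 : ℂ)]

noncomputable def CC : Fin 3 → Fin 3 → Matrix (Fin 3) (Fin 3) ℂ
  | 0, 0 => !![(199/1800 : ℂ), (29/720 : ℂ), (-(7/1800 : ℂ));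
       (29/720 : ℂ), (151/1800 : ℂ), (11/360 : ℂ);
       (-(7/1800 : ℂ)), (11/360 : ℂ), (7/72 : ℂ)]
  | 0, 1 => !![(23/900 : ℂ), (1/360 : ℂ), (47/1800 : ℂ);
       (1/360 : ℂ), (-(67/3600 : ℂ)), (-(7/360 : ℂ));
       (47/1800 : ℂ), (-(7/360 : ℂ)), (5/144 : ℂ)]
  | 0, 2 => !![(-(13/900 : ℂ)), (1/360 : ℂ), (-(7/1800 : ℂ));
       (1/360 : ℂ), (-(37/900 : ℂ)), (-(7/360 : ℂ));
       (-(7/1800 : ℂ)), (-(7/360 : ℂ)), (-(1/36 : ℂ))]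
  | 1, 0 => !![(23/900 : ℂ), (1/360 : ℂ), (47/1800 : ℂ);
       (1/360 : ℂ), (-(67/3600 : ℂ)), (-(7/360 : ℂ));
       (47/1800 : ℂ), (-(7/360 : ℂ)), (5/144 : ℂ)]
  | 1, 1 => !![(623/3600 : ℂ), (1/360 : ℂ), (-(7/1800 : ℂ));
       (1/360 : ℂ), (527/3600 : ℂ), (-(7/360 : ℂ));
       (-(7/1800 : ℂ)), (-(7/360 : ℂ)), (7/72 : ℂ)]
  | 1, 2 => !![(29/3600 : ℂ), (1/360 : ℂ), (-(61/1800 : ℂ));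
       (1/360 : ℂ), (-(1/900 : ℂ)), (-(7/360 : ℂ));
       (-(61/1800 : ℂ)), (-(7/360 : ℂ)), (5/144 : ℂ)]
  | 2, 0 => !![(-(13/900 : ℂ)), (1/360 : ℂ), (-(7/1800 : ℂ));
       (1/360 : ℂ), (-(37/900 : ℂ)), (-(7/360 : ℂ));
       (-(7/1800 : ℂ)), (-(7/360 : ℂ)), (-(1/36 : ℂ))]
  | 2, 1 => !![(29/3600 : ℂ), (1/360 : ℂ), (-(61/1800 : ℂ));
       (1/360 : ℂ), (-(1/900 : ℂ)), (-(7/360 : ℂ));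
       (-(61/1800 : ℂ)), (-(7/360 : ℂ)), (5/144 : ℂ)]
  | 2, 2 => !![(199/1800 : ℂ), (-(17/360 : ℂ)), (-(7/1800 : ℂ));
       (-(17/360 : ℂ)), (151/1800 : ℂ), (13/720 : ℂ);
       (-(7/1800 : ℂ)), (13/720 : ℂ), (7/72 : ℂ)]

lemma smul_entry (r : ℝ) (v : Fin 3 × Fin 3 → ℂ) (p q : Fin 3 × Fin 3) :
    (r • v) p * (starRingEnd ℂ) ((r • v) q)
      = ((r * r : ℝ) : ℂ) * (v p * (starRingEnd ℂ) (v q)) := by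
  simp [Pi.smul_apply, Complex.real_smul, _root_.map_mul, Complex.conj_ofReal]
  ring

lemma key (p q : Fin 3 × Fin 3) :
    tilesState p q = (1/4 : ℂ) * ((if p = q then 1 else 0)
      - ((1/2 : ℂ) * (tens (e 0) (e 0 - e 1) p * (starRingEnd ℂ) (tens (e 0) (e 0 - e 1) q)
          + tens (e 0 - e 1) (e 2) p * (starRingEnd ℂ) (tens (e 0 - e 1) (e 2) q)
          + tens (e 2) (e 1 - e 2) p * (starRingEnd ℂ) (tens (e 2) (e 1 - e 2) q)
          + tens (e 1 - e 2) (e 0) p * (starRingEnd ℂ) (tens (e 1 - e 2) (e 0) q))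
        + (1/9 : ℂ) * (tens (e 0 + e 1 + e 2) (e 0 + e 1 + e 2) p
            * (starRingEnd ℂ) (tens (e 0 + e 1 + e 2) (e 0 + e 1 + e 2) q)))) := by
  have hr : ((1 / Real.sqrt 2 * (1 / Real.sqrt 2) : ℝ) : ℂ) = 1/2 := by
    rw [div_mul_div_comm, one_mul, Real.mul_self_sqrt (by norm_num)]; norm_num
  have hr3 : ((1 / 3 * (1 / 3 : ℝ) : ℝ) : ℂ) = 1/9 := by norm_num
  simp only [tilesState, Fin.sum_univ_five, Matrix.smul_apply, Matrix.sub_apply,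
    Matrix.one_apply, Matrix.sum_apply, Matrix.add_apply, Matrix.vecMulVec_apply, tiles,
    smul_entry, hr, hr3, smul_eq_mul]
  ring

set_option maxHeartbeats 4000000 in
lemma tilesState_eq (i j a b : Fin 3) : tilesState (i, a) (j, b) = BB i j a b := by
  fin_cases i <;> fin_cases j <;> fin_cases a <;> fin_cases b <;>
  · simp only [key, tens, e, Pi.sub_apply, Pi.add_apply, Pi.single_apply, BB,
      Matrix.cons_val', Matrix.cons_val_zero, Matrix.cons_val_one, Matrix.head_cons,
      Matrix.cons_val_two, Matrix.tail_cons, Matrix.empty_val', Matrix.cons_val_fin_one,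
      Matrix.head_fin_const, Matrix.of_apply]
    norm_num [Prod.ext_iff, Fin.ext_iff]

set_option maxHeartbeats 4000000 in
lemma block_eq (θ : ℝ) (hc : Real.cos θ = -3/5) (hs : Real.sin θ = 4/5) (i j a b : Fin 3) :
    choi1 (rotU θ * (Matrix.of fun a b => tilesState (i, a) (j, b)) * (rotU θ)ᴴ) a b
      = CC i j a b := by
  have hB : (Matrix.of fun a b => tilesState (i, a) (j, b)) = BB i j := by
    ext a b; exact tilesState_eq i j a b
  rw [hB]
  fin_cases i <;> fin_cases j <;> fin_cases a <;> fin_cases b <;>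
  · simp only [choi1, rotU, BB, CC, Matrix.mul_apply, Fin.sum_univ_three, hc, hs,
      Matrix.conjTranspose_apply, Complex.conj_ofReal, Matrix.smul_apply, smul_eq_mul,
      Matrix.cons_val', Matrix.cons_val_zero, Matrix.cons_val_one, Matrix.head_cons,
      Matrix.cons_val_two, Matrix.tail_cons, Matrix.empty_val', Matrix.cons_val_fin_one,
      Matrix.head_fin_const, Matrix.of_apply, Complex.ofReal_div, Complex.ofReal_neg,
      Complex.ofReal_ofNat, _root_.map_neg, _root_.map_one, _root_.map_zero, map_div₀,
      Complex.conj_ofNat, star_one, star_zero]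
    norm_num

set_option maxHeartbeats 4000000 in
/-- Some inner-automorphism extension `φ_{C₁}(θ) = φ_{C₁} ∘ U(θ)` of the Choi map
detects the entanglement of the TILES state. -/
theorem extended_choi_detects_tiles :
    ∃ θ : ℝ,
      ¬ (matExt3 (fun X => choi1 (rotU θ * X * (rotU θ)ᴴ)) tilesState).PosSemidef := by
  refine ⟨Real.arccos (-3/5), fun h => ?_⟩
  have hc : Real.cos (Real.arccos (-3/5)) = -3/5 :=
    Real.cos_arccos (by norm_num) (by norm_num)
  have hs : Real.sin (Real.arccos (-3/5)) = 4/5 := by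
    rw [Real.sin_arccos, show (1 - (-3/5 : ℝ)^2) = (4/5)^2 by norm_num]
    exact Real.sqrt_sq (by norm_num)
  have hv := (posSemidef_iff_dotProduct_mulVec.mp h).2 (fun (p : Fin 3 × Fin 3) => !![(-1 : ℂ), 2, -1; 0, 0, 3; 1, 2, -1] p.1 p.2)
  have hM : ∀ p q : Fin 3 × Fin 3,
      (matExt3 (fun X => choi1 (rotU (Real.arccos (-3/5)) * X * (rotU (Real.arccos (-3/5)))ᴴ))
        tilesState) p q = CC p.1 q.1 p.2 q.2 := by
    intro p q
    exact block_eq _ hc hs p.1 q.1 p.2 q.2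
  simp only [dotProduct, Matrix.mulVec, Fintype.sum_prod_type, Fin.sum_univ_three,
    hM, Pi.star_apply] at hv
  norm_num [CC, star, Complex.le_def,
    Matrix.cons_val', Matrix.cons_val_zero, Matrix.cons_val_one, Matrix.head_cons,
    Matrix.cons_val_two, Matrix.tail_cons, Matrix.empty_val', Matrix.cons_val_fin_one,
    Matrix.head_fin_const, Matrix.of_apply] at hv
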